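/- Let E < E₀ and let ρ : [−1,1] → [0,1] be continuous. Then the unique solution Φ(ρ) ∈ 𝓕_E of the Euler–Lagrange equation is twice continuously differentiable on [−1,1], and the equation φ''/(φ'(φ'−E)) + 1/(1+e^φ) = ρ holds at every point of [−1,1]. -/

import Mathlib

open Real MeasureTheory Set Filter Topology Function

noncomputable section

/-- Mobility `χ(a) = a(1−a)`. -/
def chi (a : ℝ) : ℝ := a * (1 - a)

/-- The set `𝓜`: measurable density profiles on `[−1,1]` with values in `[0,1]`. -/
def memM (ρ : ℝ → ℝ) : Prop :=
  Measurable ρ ∧ ∀ u ∈ Set.Icc (-1:ℝ) 1, ρ u ∈ Set.Icc (0:ℝ) 1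

/-- `φ ∈ 𝓕_E`, with explicit derivative function `d`: `φ` is `C¹` on `[−1,1]` with
Lipschitz derivative `d`, `φ(−1) = φ₋`, `φ(1) = φ₊`, and `d > max 0 E` on `[−1,1]`. -/
def memF (φm φp E : ℝ) (φ d : ℝ → ℝ) : Prop :=
  (∀ u ∈ Set.Icc (-1:ℝ) 1, HasDerivWithinAt φ (d u) (Set.Icc (-1:ℝ) 1) u) ∧
  (∃ L : NNReal, LipschitzOnWith L d (Set.Icc (-1:ℝ) 1)) ∧
  φ (-1) = φm ∧ φ 1 = φp ∧
  (∀ u ∈ Set.Icc (-1:ℝ) 1, max 0 E < d u)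

/-- The Euler–Lagrange equation `φ''/(φ'(φ'−E)) + 1/(1+e^φ) = ρ` holds Lebesgue-a.e.
on `(−1,1)`, where `d = φ'`. -/
def solvesEL (E : ℝ) (ρ φ d : ℝ → ℝ) : Prop :=
  ∀ᵐ u ∂(volume : Measure ℝ), u ∈ Set.Ioo (-1:ℝ) 1 →
    ∃ d2 : ℝ, HasDerivAt d d2 u ∧
      d2 / (d u * (d u - E)) + 1 / (1 + Real.exp (φ u)) = ρ u


/-- Clamp to `[-1,1]`. -/
def clamp (x : ℝ) : ℝ := max (-1) (min 1 x)

lemma clamp_mem (x : ℝ) : clamp x ∈ Set.Icc (-1:ℝ) 1 :=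
  ⟨le_max_left _ _, max_le (by norm_num) (min_le_left _ _)⟩

lemma clamp_eq {x : ℝ} (hx : x ∈ Set.Icc (-1:ℝ) 1) : clamp x = x := by
  have h1 := hx.1; have h2 := hx.2
  simp only [clamp, min_eq_right h2, max_eq_right h1]

lemma clamp_mono : Monotone clamp :=
  fun _ _ h => max_le_max le_rfl (min_le_min le_rfl h)

lemma clamp_cont : Continuous clamp :=
  continuous_const.max (continuous_const.min continuous_id)

lemma clamp_lip {x y : ℝ} (h : x ≤ y) : clamp y - clamp x ≤ y - x := by
  simp only [clamp, max_def, min_def]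
  split_ifs <;> linarith

/-- FTC for a Lipschitz function on `[-1,1]` with continuous a.e. derivative. -/
lemma lip_ftc {d g : ℝ → ℝ} {L : NNReal}
    (hLip : LipschitzOnWith L d (Set.Icc (-1:ℝ) 1))
    (hg : Continuous g)
    (hae : ∀ᵐ u ∂(volume : Measure ℝ), u ∈ Set.Ioo (-1:ℝ) 1 → HasDerivAt d (g u) u) :
    ∀ x ∈ Set.Icc (-1:ℝ) 1, d x - d (-1) = ∫ t in Set.Ioc (-1:ℝ) x, g t := by
  set K : ℝ := (L : ℝ) with hKdef
  have hK0 : (0:ℝ) ≤ K := L.coe_nonneg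
  -- distance bound from Lipschitz
  have hdist : ∀ x ∈ Set.Icc (-1:ℝ) 1, ∀ y ∈ Set.Icc (-1:ℝ) 1, |d x - d y| ≤ K * |x - y| := by
    intro x hx y hy
    have := hLip.dist_le_mul x hx y hy
    rwa [Real.dist_eq, Real.dist_eq] at this
  set m : ℝ → ℝ := fun x => d (clamp x) + K * clamp x with hmdef
  have hm_eq : ∀ x ∈ Set.Icc (-1:ℝ) 1, m x = d x + K * x := by
    intro x hx; simp only [hmdef, clamp_eq hx]
  have hmono_aux : ∀ x y : ℝ, x ≤ y → m y - m x ≤ 2 * K * (y - x) ∧ 0 ≤ m y - m x := by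
    intro x y hxy
    have h1 : clamp x ≤ clamp y := clamp_mono hxy
    have h2 := hdist _ (clamp_mem y) _ (clamp_mem x)
    rw [abs_of_nonneg (by linarith : (0:ℝ) ≤ clamp y - clamp x)] at h2
    have h3 := abs_le.1 h2
    have h4 := clamp_lip hxy
    constructor
    · simp only [hmdef]; nlinarith [h3.2]
    · simp only [hmdef]; nlinarith [h3.1]
  have hmmono : Monotone m := fun x y hxy => by linarith [(hmono_aux x y hxy).2]
  have hmcont : Continuous m :=
    ((hLip.continuousOn.comp_continuous clamp_cont clamp_mem)).add
      (continuous_const.mul clamp_cont)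
  set S : StieltjesFunction ℝ := ⟨m, hmmono, fun x => hmcont.continuousAt.continuousWithinAt⟩
    with hSdef
  -- finiteness
  have hmbot : ∀ y : ℝ, y ≤ -1 → m y = d (-1) + K * (-1) := by
    intro y hy
    have : clamp y = -1 := by
      simp only [clamp, min_def, max_def]; split_ifs <;> linarith
    simp only [hmdef, this]
  have hmtop : ∀ y : ℝ, 1 ≤ y → m y = d 1 + K * 1 := by
    intro y hy
    have : clamp y = 1 := by
      simp only [clamp, min_def, max_def]; split_ifs <;> linarith
    simp only [hmdef, this]
  have hbot : Tendsto S atBot (𝓝 (d (-1) + K * (-1))) := by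
    apply Tendsto.congr' _ tendsto_const_nhds
    filter_upwards [eventually_le_atBot (-1:ℝ)] with y hy
    exact (hmbot y hy).symm
  have htop : Tendsto S atTop (𝓝 (d 1 + K * 1)) := by
    apply Tendsto.congr' _ tendsto_const_nhds
    filter_upwards [eventually_ge_atTop (1:ℝ)] with y hy
    exact (hmtop y hy).symm
  haveI : IsFiniteMeasure S.measure := S.isFiniteMeasure hbot htop
  -- S.measure ≪ volume
  set S2 : StieltjesFunction ℝ :=
    ⟨fun x => 2 * K * x - m x, by
      intro x y hxy
      have := (hmono_aux x y hxy).1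
      dsimp only; linarith,
      fun x => ((continuous_const.mul continuous_id).sub hmcont).continuousAt.continuousWithinAt⟩
  have hsum : S.measure + S2.measure = ((2 * L : NNReal)) • (volume : Measure ℝ) := by
    rw [← StieltjesFunction.measure_add, Real.volume_eq_stieltjes_id,
      ← StieltjesFunction.measure_smul]
    congr 1
    ext x
    show m x + (2 * K * x - m x) = ((2 * L : NNReal) : ℝ) * x
    push_cast
    ring
  have hle : S.measure ≤ ((2 * L : NNReal)) • (volume : Measure ℝ) := by
    rw [← hsum]; exact Measure.le_add_right le_rfl
  have hac : S.measure ≪ (volume : Measure ℝ) := by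
    refine Measure.AbsolutelyContinuous.mk fun s hs h0 => ?_
    refine le_antisymm ?_ zero_le
    have := hle s
    simpa [h0] using this
  -- a.e. derivative of m
  set H : ℝ → ℝ := fun x => if x ∈ Set.Ioo (-1:ℝ) 1 then g x + K else 0 with hHdef
  have hmae : ∀ᵐ x ∂(volume : Measure ℝ), HasDerivAt m (H x) x := by
    have hne : ∀ᵐ x ∂(volume : Measure ℝ), x ∉ ({-1, 1} : Set ℝ) :=
      (((Set.finite_singleton (1:ℝ)).insert (-1)).countable).ae_notMem _
    filter_upwards [hae, hne] with x hx hxne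
    by_cases h1 : x ∈ Set.Ioo (-1:ℝ) 1
    · have hd := hx h1
      have h2 : HasDerivAt (fun y => d y + K * y) (g x + K) x := by
        have := hd.add ((hasDerivAt_id x).const_mul K)
        simp only [id_eq, mul_one] at this
        exact this
      have h3 : HasDerivAt m (g x + K) x := by
        apply h2.congr_of_eventuallyEq
        filter_upwards [Ioo_mem_nhds h1.1 h1.2] with y hy
        exact hm_eq y (Ioo_subset_Icc_self hy)
      rw [show H x = g x + K from if_pos h1]
      exact h3
    · have hHx : H x = 0 := if_neg h1
      rw [hHx]
      have hx1 : x ≠ -1 := fun h => hxne (by simp [h])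
      have hx2 : x ≠ (1:ℝ) := fun h => hxne (by simp [h])
      rw [Set.mem_Ioo, not_and_or, not_lt, not_lt] at h1
      rcases h1 with h | h
      · -- x ≤ -1, so x < -1
        have hlt : x < -1 := lt_of_le_of_ne h hx1
        have : HasDerivAt (fun _ : ℝ => d (-1) + K * (-1)) 0 x := hasDerivAt_const _ _
        apply this.congr_of_eventuallyEq
        filter_upwards [Iio_mem_nhds hlt] with y hy
        exact hmbot y (le_of_lt hy)
      · have hlt : (1:ℝ) < x := lt_of_le_of_ne (not_lt.1 (by simpa using h)) (Ne.symm hx2)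
        have : HasDerivAt (fun _ : ℝ => d 1 + K * 1) 0 x := hasDerivAt_const _ _
        apply this.congr_of_eventuallyEq
        filter_upwards [Ioi_mem_nhds hlt] with y hy
        exact hmtop y (le_of_lt hy)
  -- identify rnDeriv
  have hrnH : ∀ᵐ x ∂(volume : Measure ℝ),
      S.measure.rnDeriv volume x = ENNReal.ofReal (H x) := by
    filter_upwards [S.ae_hasDerivAt, hmae, Measure.rnDeriv_lt_top S.measure volume]
      with x h1 h2 h3
    have h4 : HasDerivAt m ((S.measure.rnDeriv volume x).toReal) x := h1
    have h5 : (S.measure.rnDeriv volume x).toReal = H x := h4.unique h2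
    rw [← h5, ENNReal.ofReal_toReal h3.ne]
  -- nonnegativity a.e.
  have hbd : ∀ᵐ u ∂(volume : Measure ℝ), u ∈ Set.Ioo (-1:ℝ) 1 → |g u| ≤ K := by
    filter_upwards [hae] with u hu hmem
    have h1 : HasDerivAt d (g u) u := hu hmem
    have h2 : ‖ContinuousLinearMap.smulRight (1 : ℝ →L[ℝ] ℝ) (g u)‖ ≤ K :=
      HasFDerivAt.le_of_lipschitzOn (HasDerivAt.hasFDerivAt h1) (Icc_mem_nhds hmem.1 hmem.2) hLip
    rwa [ContinuousLinearMap.norm_smulRight_apply, norm_one, one_mul,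
      Real.norm_eq_abs] at h2
  -- main computation
  intro x hx
  have hx1 : (-1:ℝ) ≤ x := hx.1
  have hIoc : Set.Ioc (-1:ℝ) x ⊆ Set.Icc (-1:ℝ) 1 := fun t ht => ⟨le_of_lt ht.1, ht.2.trans hx.2⟩
  have hμ1 : S.measure (Set.Ioc (-1) x) = ENNReal.ofReal (m x - m (-1)) :=
    S.measure_Ioc _ _
  have hμ2 : S.measure (Set.Ioc (-1) x)
      = ∫⁻ t in Set.Ioc (-1:ℝ) x, ENNReal.ofReal (g t + K) ∂(volume : Measure ℝ) := by
    rw [← Measure.setLIntegral_rnDeriv hac (Set.Ioc (-1:ℝ) x)]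
    apply lintegral_congr_ae
    have hone : ∀ᵐ t ∂(volume : Measure ℝ), t ≠ (1:ℝ) :=
      (Set.countable_singleton (1:ℝ)).ae_notMem _
    filter_upwards [ae_restrict_of_ae hrnH, ae_restrict_of_ae hone,
      ae_restrict_mem measurableSet_Ioc] with t h1 h2 h3
    have hmem : t ∈ Set.Ioo (-1:ℝ) 1 := ⟨h3.1, lt_of_le_of_ne (h3.2.trans hx.2) h2⟩
    rw [h1, hHdef]
    simp [hmem]
  have hint : IntegrableOn (fun t => g t + K) (Set.Ioc (-1:ℝ) x) volume :=
    ((hg.add continuous_const).integrableOn_Ioc)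
  have hnn : 0 ≤ᵐ[(volume : Measure ℝ).restrict (Set.Ioc (-1:ℝ) x)] fun t => g t + K := by
    have hone : ∀ᵐ t ∂(volume : Measure ℝ), t ≠ (1:ℝ) :=
      (Set.countable_singleton (1:ℝ)).ae_notMem _
    filter_upwards [ae_restrict_of_ae hbd, ae_restrict_of_ae hone,
      ae_restrict_mem measurableSet_Ioc] with t h1 h2 h3
    have hmem : t ∈ Set.Ioo (-1:ℝ) 1 := ⟨h3.1, lt_of_le_of_ne (h3.2.trans hx.2) h2⟩
    have := (abs_le.1 (h1 hmem)).1
    simp only [Pi.zero_apply]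
    linarith
  have hμ3 : ENNReal.ofReal (∫ t in Set.Ioc (-1:ℝ) x, (g t + K) ∂(volume : Measure ℝ))
      = ∫⁻ t in Set.Ioc (-1:ℝ) x, ENNReal.ofReal (g t + K) ∂(volume : Measure ℝ) :=
    ofReal_integral_eq_lintegral_ofReal hint hnn
  have heq : m x - m (-1) = ∫ t in Set.Ioc (-1:ℝ) x, (g t + K) ∂(volume : Measure ℝ) := by
    have h4 : ENNReal.ofReal (m x - m (-1))
        = ENNReal.ofReal (∫ t in Set.Ioc (-1:ℝ) x, (g t + K) ∂(volume : Measure ℝ)) := by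
      rw [hμ3, ← hμ2, ← hμ1]
    have h5 : 0 ≤ m x - m (-1) := by linarith [hmmono hx1]
    have h6 : 0 ≤ ∫ t in Set.Ioc (-1:ℝ) x, (g t + K) ∂(volume : Measure ℝ) :=
      integral_nonneg_of_ae hnn
    exact (ENNReal.ofReal_eq_ofReal_iff h5 h6).1 h4
  have hsplit : ∫ t in Set.Ioc (-1:ℝ) x, (g t + K) ∂(volume : Measure ℝ)
      = (∫ t in Set.Ioc (-1:ℝ) x, g t ∂(volume : Measure ℝ)) + K * (x + 1) := by
    rw [integral_add hg.integrableOn_Ioc (integrableOn_const measure_Ioc_lt_top.ne)]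
    congr 1
    rw [setIntegral_const, Real.volume_real_Ioc_of_le (by linarith : (-1:ℝ) ≤ x), smul_eq_mul]
    ring
  have hmx := hm_eq x hx
  have hm1 := hm_eq (-1) (by constructor <;> norm_num)
  rw [hmx, hm1] at heq
  rw [hsplit] at heq
  linarith


/-- For continuous `ρ`, the solution `Φ(ρ) ∈ 𝓕_E` of the Euler–Lagrange equation is
`C²` on `[−1,1]` and the equation holds at every point. -/
theorem stmt6 (ρm ρp φm φp E0 : ℝ)
    (h0 : 0 < ρm) (h1 : ρm < ρp) (h2 : ρp < 1)
    (hφm : φm = Real.log (ρm / (1 - ρm))) (hφp : φp = Real.log (ρp / (1 - ρp)))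
    (hE0 : E0 = (φp - φm) / 2) (E : ℝ) (hE : E < E0)
    (ρ : ℝ → ℝ) (hρ : memM ρ) (hρc : ContinuousOn ρ (Set.Icc (-1:ℝ) 1))
    (φ d : ℝ → ℝ) (hF : memF φm φp E φ d) (hEL : solvesEL E ρ φ d) :
    ∃ d2 : ℝ → ℝ, ContinuousOn d2 (Set.Icc (-1:ℝ) 1) ∧
      (∀ u ∈ Set.Icc (-1:ℝ) 1, HasDerivWithinAt d (d2 u) (Set.Icc (-1:ℝ) 1) u) ∧
      (∀ u ∈ Set.Icc (-1:ℝ) 1,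
        d2 u / (d u * (d u - E)) + 1 / (1 + Real.exp (φ u)) = ρ u) := by
  obtain ⟨hφd, ⟨L, hLip⟩, hφm1, hφp1, hdpos⟩ := hF
  have hdc : ContinuousOn d (Set.Icc (-1:ℝ) 1) := hLip.continuousOn
  have hφc : ContinuousOn φ (Set.Icc (-1:ℝ) 1) := fun u hu => (hφd u hu).continuousWithinAt
  set gval : ℝ → ℝ := fun u => (ρ u - 1 / (1 + Real.exp (φ u))) * (d u * (d u - E)) with hgv
  have hexp : ∀ u : ℝ, (0:ℝ) < 1 + Real.exp (φ u) := fun u => by positivity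
  have hD : ∀ u ∈ Set.Icc (-1:ℝ) 1, d u * (d u - E) ≠ 0 := by
    intro u hu
    have h := hdpos u hu
    have ha : (0:ℝ) < d u := lt_of_le_of_lt (le_max_left 0 E) h
    have hb : (0:ℝ) < d u - E := by
      have := lt_of_le_of_lt (le_max_right 0 E) h; linarith
    exact ne_of_gt (mul_pos ha hb)
  have hgc : ContinuousOn gval (Set.Icc (-1:ℝ) 1) := by
    apply ContinuousOn.mul
    · exact hρc.sub (continuousOn_const.div
        (continuousOn_const.add (Real.continuous_exp.comp_continuousOn hφc))
        (fun u _ => ne_of_gt (hexp u)))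
    · exact hdc.mul (hdc.sub continuousOn_const)
  set G : ℝ → ℝ := fun x => gval (clamp x) with hGdef
  have hGc : Continuous G := hgc.comp_continuous clamp_cont clamp_mem
  have hGeq : ∀ x ∈ Set.Icc (-1:ℝ) 1, G x = gval x := by
    intro x hx; simp only [hGdef, clamp_eq hx]
  have hae : ∀ᵐ u ∂(volume : Measure ℝ), u ∈ Set.Ioo (-1:ℝ) 1 → HasDerivAt d (G u) u := by
    filter_upwards [hEL] with u hu hmem
    obtain ⟨c, hc, heq⟩ := hu hmem
    have hIcc : u ∈ Set.Icc (-1:ℝ) 1 := Set.Ioo_subset_Icc_self hmem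
    have hD' := hD u hIcc
    have h3 : c / (d u * (d u - E)) = ρ u - 1 / (1 + Real.exp (φ u)) := by linarith
    have h4 : c = gval u := by
      have hr : gval u = (ρ u - 1 / (1 + Real.exp (φ u))) * (d u * (d u - E)) := rfl
      rw [hr, ← h3, div_mul_cancel₀ _ hD']
    rw [hGeq u hIcc, ← h4]
    exact hc
  have key := lip_ftc hLip hGc hae
  set F : ℝ → ℝ := fun x => d (-1) + ∫ t in (-1:ℝ)..x, G t with hFdef
  have hFder : ∀ u : ℝ, HasDerivAt F (G u) u := by
    intro u
    have h1 : HasDerivAt (fun x => ∫ t in (-1:ℝ)..x, G t) (G u) u :=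
      intervalIntegral.integral_hasDerivAt_right (hGc.intervalIntegrable _ _)
        hGc.stronglyMeasurable.stronglyMeasurableAtFilter hGc.continuousAt
    exact h1.const_add (d (-1))
  have hdF : ∀ u ∈ Set.Icc (-1:ℝ) 1, d u = F u := by
    intro u hu
    have h1 := key u hu
    rw [hFdef]
    simp only
    rw [intervalIntegral.integral_of_le hu.1]
    linarith
  refine ⟨gval, hgc, ?_, ?_⟩
  · intro u hu
    have h2 : HasDerivWithinAt d (G u) (Set.Icc (-1:ℝ) 1) u :=
      ((hFder u).hasDerivWithinAt).congr (fun y hy => hdF y hy) (hdF u hu)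
    rwa [hGeq u hu] at h2
  · intro u hu
    have hD' := hD u hu
    have h5 : gval u / (d u * (d u - E)) = ρ u - 1 / (1 + Real.exp (φ u)) := by
      have hr : gval u = (ρ u - 1 / (1 + Real.exp (φ u))) * (d u * (d u - E)) := rfl
      rw [hr]
      exact mul_div_cancel_right₀ _ hD'
    rw [h5]; ring

end
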